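/- Let f be a log-concave probability density on ℝ that is continuous, strictly positive, and has finite first moment, and let F(x) = ∫_{−∞}^x f(u) du. Then the function h⁻(x) = x − (∫_{−∞}^x u f(u) du)/(∫_{−∞}^x f(u) du) is monotonically nondecreasing on ℝ; equivalently, for every τ ∈ ℝ, f(τ) · ∫_{−∞}^τ f(x)(τ − x) dx ≤ (F(τ))². -/

import Mathlib

open Real MeasureTheory

lemma lc_key (f : ℝ → ℝ) (hf_pos : ∀ x, 0 < f x)
    (hconc : ConcaveOn ℝ Set.univ (fun x => Real.log (f x)))
    {x s τ : ℝ} (hxs : x ≤ s) (hsτ : s ≤ τ) :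
    f τ * f x ≤ f s * f (τ + x - s) := by
  rcases eq_or_lt_of_le (hxs.trans hsτ) with h | h
  · obtain rfl : x = s := le_antisymm hxs (h ▸ hsτ)
    obtain rfl : x = τ := h
    have e : x + x - x = x := by ring
    rw [e]
  · set t : ℝ := (s - x) / (τ - x) with ht
    have hτx : 0 < τ - x := sub_pos.2 h
    have ht0 : 0 ≤ t := div_nonneg (sub_nonneg.2 hxs) hτx.le
    have ht1 : t ≤ 1 := (div_le_one hτx).2 (by linarith)
    have hs_eq : s = (1 - t) * x + t * τ := by
      have e : t * (τ - x) = s - x := by rw [ht]; exact div_mul_cancel₀ _ hτx.ne'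
      linarith
    have hs_eq' : τ + x - s = t * x + (1 - t) * τ := by
      rw [hs_eq]; ring
    have h1 := hconc.2 (Set.mem_univ x) (Set.mem_univ τ) (by linarith : (0:ℝ) ≤ 1 - t) ht0 (by ring)
    have h2 := hconc.2 (Set.mem_univ x) (Set.mem_univ τ) ht0 (by linarith : (0:ℝ) ≤ 1 - t) (by ring)
    simp only [smul_eq_mul] at h1 h2
    rw [← hs_eq] at h1
    rw [← hs_eq'] at h2
    have key : Real.log (f τ) + Real.log (f x) ≤ Real.log (f s) + Real.log (f (τ + x - s)) := by
      linarith
    calc f τ * f x = Real.exp (Real.log (f τ) + Real.log (f x)) := by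
            rw [Real.exp_add, Real.exp_log (hf_pos _), Real.exp_log (hf_pos _)]
      _ ≤ Real.exp (Real.log (f s) + Real.log (f (τ + x - s))) := Real.exp_le_exp.2 key
      _ = f s * f (τ + x - s) := by
            rw [Real.exp_add, Real.exp_log (hf_pos _), Real.exp_log (hf_pos _)]

lemma translate_Iic (f : ℝ → ℝ) (c s : ℝ) :
    ∫ x in Set.Iic s, f (x + c) = ∫ y in Set.Iic (s + c), f y := by
  have hpre : (fun x : ℝ => x + c) ⁻¹' Set.Iic (s + c) = Set.Iic s := by ext x; simp
  rw [← hpre]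
  exact (measurePreserving_add_right volume c).setIntegral_preimage_emb
    (Homeomorph.addRight c).measurableEmbedding f (Set.Iic (s + c))

lemma lc_ratio (f : ℝ → ℝ) (hf_pos : ∀ x, 0 < f x)
    (hconc : ConcaveOn ℝ Set.univ (fun x => Real.log (f x)))
    (hf_int : Integrable f) {s τ : ℝ} (h : s ≤ τ) :
    f τ * ∫ x in Set.Iic s, f x ≤ f s * ∫ x in Set.Iic τ, f x := by
  have hint_tr : Integrable (fun x => f (x + (τ - s))) := hf_int.comp_add_right (τ - s)
  calc f τ * ∫ x in Set.Iic s, f x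
      = ∫ x in Set.Iic s, f τ * f x := (integral_const_mul _ _).symm
    _ ≤ ∫ x in Set.Iic s, f s * f (x + (τ - s)) := by
        apply setIntegral_mono_on ((hf_int.const_mul _).integrableOn)
          ((hint_tr.const_mul _).integrableOn) measurableSet_Iic
        intro x hx
        have := lc_key f hf_pos hconc (Set.mem_Iic.mp hx) h
        have e : τ + x - s = x + (τ - s) := by ring
        rwa [e] at this
    _ = f s * ∫ x in Set.Iic s, f (x + (τ - s)) := integral_const_mul _ _
    _ = f s * ∫ x in Set.Iic τ, f x := by
        rw [translate_Iic f (τ - s) s]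
        norm_num

lemma fubini_Iic (f : ℝ → ℝ) (hf_pos : ∀ x, 0 < f x)
    (hf_cont : Continuous f) (hf_int : Integrable f)
    (hf_mom : Integrable (fun u => u * f u)) (τ : ℝ) :
    (∫ x in Set.Iic τ, f x * (τ - x)) = (∫ s in Set.Iic τ, (∫ x in Set.Iic s, f x)) ∧
      IntegrableOn (fun s => ∫ x in Set.Iic s, f x) (Set.Iic τ) := by
  set S : Set (ℝ × ℝ) := {p : ℝ × ℝ | p.1 < p.2 ∧ p.2 ≤ τ} with hS
  have hSm : MeasurableSet S :=
    (measurableSet_lt measurable_fst measurable_snd).inter (measurable_snd measurableSet_Iic)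
  set g : ℝ × ℝ → ℝ := S.indicator (fun p => f p.1) with hg
  have hgm : AEStronglyMeasurable g (volume.prod volume) :=
    ((hf_cont.comp continuous_fst).aestronglyMeasurable).indicator hSm
  have hsec : ∀ x : ℝ, (fun s => g (x, s)) = (Set.Ioc x τ).indicator (fun _ => f x) := by
    intro x; funext s
    by_cases h : s ∈ Set.Ioc x τ
    · rw [Set.indicator_of_mem h]
      exact Set.indicator_of_mem (by exact ⟨h.1, h.2⟩) _
    · rw [Set.indicator_of_notMem h]
      exact Set.indicator_of_notMem (fun hc => h ⟨hc.1, hc.2⟩) _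
  have hnn : ∀ p, 0 ≤ g p := fun p =>
    Set.indicator_nonneg (fun q _ => (hf_pos q.1).le) p
  have hsec_int : ∀ x : ℝ, ∫ s, g (x, s) = (Set.Iic τ).indicator (fun x => f x * (τ - x)) x := by
    intro x
    rw [hsec x, integral_indicator_const _ measurableSet_Ioc]
    by_cases h : x ≤ τ
    · rw [Set.indicator_of_mem (Set.mem_Iic.mpr h), Real.volume_real_Ioc_of_le h]
      simp [mul_comm]
    · rw [Set.indicator_of_notMem (fun hc => h (Set.mem_Iic.mp hc)),
        Set.Ioc_eq_empty (by intro hc; exact h hc.le)]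
      simp
  have hind_int : Integrable ((Set.Iic τ).indicator (fun x => f x * (τ - x))) := by
    have : Integrable (fun x => f x * (τ - x)) := by
      have := (hf_int.const_mul τ).sub hf_mom
      apply this.congr
      filter_upwards with x
      simp only [Pi.sub_apply]
      ring
    exact this.indicator measurableSet_Iic
  have hgint : Integrable g (volume.prod volume) := by
    rw [integrable_prod_iff hgm]
    constructor
    · filter_upwards with x
      rw [hsec x]
      exact (integrableOn_const measure_Ioc_lt_top.ne).integrable_indicator
        measurableSet_Ioc
    · apply hind_int.congr
      filter_upwards with x
      rw [← hsec_int x]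
      rw [integral_congr_ae (Filter.Eventually.of_forall fun s =>
        (Real.norm_of_nonneg (hnn (x, s))))]
  have hRsec : (fun s => ∫ x, g (x, s)) =
      (Set.Iic τ).indicator (fun s => ∫ x in Set.Iic s, f x) := by
    funext s
    by_cases h : s ≤ τ
    · rw [Set.indicator_of_mem (Set.mem_Iic.mpr h)]
      have : (fun x => g (x, s)) = (Set.Iio s).indicator f := by
        funext x
        by_cases hx : x < s
        · rw [show g (x, s) = f x from Set.indicator_of_mem (show (x, s) ∈ S from ⟨hx, h⟩) _,
            Set.indicator_of_mem (Set.mem_Iio.mpr hx)]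
        · rw [show g (x, s) = 0 from
            Set.indicator_of_notMem (show (x, s) ∉ S from fun hc => hx hc.1) _,
            Set.indicator_of_notMem (fun hc => hx (Set.mem_Iio.mp hc))]
      rw [this, integral_indicator measurableSet_Iio, ← integral_Iic_eq_integral_Iio]
    · rw [Set.indicator_of_notMem (fun hc => h (Set.mem_Iic.mp hc))]
      have : (fun x => g (x, s)) = fun _ => (0:ℝ) := by
        funext x
        exact Set.indicator_of_notMem (fun hc => h hc.2) _
      rw [this, integral_zero]
  constructor
  · have hswap := integral_integral_swap (f := fun x s => g (x, s)) (by exact hgint)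
    calc ∫ x in Set.Iic τ, f x * (τ - x)
        = ∫ x, (Set.Iic τ).indicator (fun x => f x * (τ - x)) x :=
          (integral_indicator measurableSet_Iic).symm
      _ = ∫ x, ∫ s, g (x, s) := by
          congr 1; funext x; exact (hsec_int x).symm
      _ = ∫ s, ∫ x, g (x, s) := hswap
      _ = ∫ s, (Set.Iic τ).indicator (fun s => ∫ x in Set.Iic s, f x) s := by
          rw [← hRsec]
      _ = ∫ s in Set.Iic τ, (∫ x in Set.Iic s, f x) := integral_indicator measurableSet_Iic
  · have := hgint.integral_prod_right
    rw [← integrable_indicator_iff measurableSet_Iic, ← hRsec]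
    exact this

lemma hasDeriv_Iic (g : ℝ → ℝ) (hg_cont : Continuous g) (hg_int : Integrable g) (x : ℝ) :
    HasDerivAt (fun y => ∫ t in Set.Iic y, g t) (g x) x := by
  have key : ∀ y : ℝ, ∫ t in Set.Iic y, g t = (∫ t in Set.Iic 0, g t) + ∫ t in (0:ℝ)..y, g t := by
    intro y
    rw [← intervalIntegral.integral_Iic_sub_Iic hg_int.integrableOn hg_int.integrableOn]
    ring
  have hd : HasDerivAt (fun y => (∫ t in Set.Iic 0, g t) + ∫ t in (0:ℝ)..y, g t) (g x) x := by
    apply HasDerivAt.const_add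
    exact intervalIntegral.integral_hasDerivAt_right hg_int.intervalIntegrable
      (hg_cont.stronglyMeasurable.stronglyMeasurableAtFilter) hg_cont.continuousAt
  exact hd.congr_of_eventuallyEq (Filter.Eventually.of_forall key)

/-- For a log-concave, continuous, strictly positive probability density `f` on `ℝ` with
finite first moment, the function `h⁻(x) = x − (∫_{−∞}^x u f(u) du)/(∫_{−∞}^x f(u) du)`
is monotonically nondecreasing; equivalently, for every `τ`,
`f(τ) · ∫_{−∞}^τ f(x)(τ − x) dx ≤ (F(τ))²` where `F(x) = ∫_{−∞}^x f`. -/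
theorem cond_mean_below_monotone (f : ℝ → ℝ)
    (hf_pos : ∀ x, 0 < f x)
    (hf_cont : Continuous f)
    (hf_logconc : ConcaveOn ℝ Set.univ (fun x => Real.log (f x)))
    (hf_int : Integrable f)
    (hf_prob : ∫ x, f x = 1)
    (hf_mom : Integrable (fun u => u * f u)) :
    Monotone (fun x => x - (∫ u in Set.Iic x, u * f u) / (∫ u in Set.Iic x, f u)) ∧
      ∀ τ : ℝ, f τ * ∫ x in Set.Iic τ, f x * (τ - x) ≤ (∫ u in Set.Iic τ, f u) ^ 2 := by
  set F : ℝ → ℝ := fun x => ∫ u in Set.Iic x, f u with hF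
  set M : ℝ → ℝ := fun x => ∫ u in Set.Iic x, u * f u with hM
  have hFpos : ∀ x, 0 < F x := by
    intro x
    rw [hF]
    rw [setIntegral_pos_iff_support_of_nonneg_ae
      (Filter.Eventually.of_forall fun u => (hf_pos u).le) hf_int.integrableOn]
    have hsupp : Function.support f = Set.univ := by
      ext u; simp [Function.mem_support, (hf_pos u).ne']
    rw [hsupp, Set.univ_inter, Real.volume_Iic]
    exact ENNReal.zero_lt_top
  have main : ∀ τ : ℝ, f τ * ∫ x in Set.Iic τ, f x * (τ - x) ≤ (∫ u in Set.Iic τ, f u) ^ 2 := by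
    intro τ
    obtain ⟨heq, hFint⟩ := fubini_Iic f hf_pos hf_cont hf_int hf_mom τ
    calc f τ * ∫ x in Set.Iic τ, f x * (τ - x)
        = f τ * ∫ s in Set.Iic τ, F s := by rw [heq]
      _ = ∫ s in Set.Iic τ, f τ * F s := (integral_const_mul _ _).symm
      _ ≤ ∫ s in Set.Iic τ, f s * F τ := by
          apply setIntegral_mono_on (hFint.const_mul _)
            ((hf_int.mul_const _).integrableOn) measurableSet_Iic
          intro s hs
          exact lc_ratio f hf_pos hf_logconc hf_int (Set.mem_Iic.mp hs)
      _ = (∫ s in Set.Iic τ, f s) * F τ := integral_mul_const _ _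
      _ = (∫ u in Set.Iic τ, f u) ^ 2 := by rw [hF, sq]
  refine ⟨?_, main⟩
  have hFd : ∀ x, HasDerivAt F (f x) x := hasDeriv_Iic f hf_cont hf_int
  have hMd : ∀ x, HasDerivAt M (x * f x) x :=
    hasDeriv_Iic (fun u => u * f u) (continuous_id.mul hf_cont) hf_mom
  have hhd : ∀ x, HasDerivAt (fun x => x - M x / F x)
      (1 - ((x * f x) * F x - M x * (f x)) / F x ^ 2) x := by
    intro x
    exact (hasDerivAt_id x).sub ((hMd x).div (hFd x) (hFpos x).ne')
  have hkey : ∀ x, f x * (x * F x - M x) ≤ F x ^ 2 := by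
    intro x
    have h1 : ∫ u in Set.Iic x, f u * (x - u) = x * F x - M x := by
      rw [hF, hM]
      rw [show (fun u => f u * (x - u)) = fun u => x * f u - u * f u from by funext u; ring]
      rw [integral_sub ((hf_int.const_mul x).integrableOn) hf_mom.integrableOn,
        integral_const_mul]
    have := main x
    rw [h1] at this
    exact this
  have hderiv_nonneg : ∀ x, 0 ≤ 1 - ((x * f x) * F x - M x * (f x)) / F x ^ 2 := by
    intro x
    rw [sub_nonneg, div_le_one (pow_pos (hFpos x) 2)]
    nlinarith [hkey x]
  exact monotone_of_deriv_nonneg (fun x => (hhd x).differentiableAt)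
    (fun x => by rw [(hhd x).deriv]; exact hderiv_nonneg x)
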